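/- There exist universal constants C, c > 0 such that for every integer n ≥ 3, every t ≥ 0, and X a random vector in ℝ^n with the standard normal distribution N(0, I_n), with probability at least 1 − C·exp(−t²) the following event occurs: for every integer i with 1 ≤ i ≤ (n+1)/2, X_[i] ≤ C·(ln(n/i) + t²/i)^{1/2}. -/

import Mathlib

open MeasureTheory ProbabilityTheory

/-- `decRe x` is the non-increasing rearrangement of `(|x_1|, …, |x_n|)`
(indexed from `0`, so `decRe x i = x_[i+1]` in the paper's notation). -/
noncomputable def decRe {n : ℕ} (x : Fin n → ℝ) : Fin n → ℝ :=
  fun i => |x (Tuple.sort (fun j => |x j|) i.rev)|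

/-- The standard Gaussian measure `N(0, I_n)` on `ℝ^n`. -/
noncomputable def stdGaussian (n : ℕ) : Measure (Fin n → ℝ) :=
  Measure.pi fun _ => gaussianReal 0 1

section Helpers
open Real

/-- the set of `x` with at least `k` coordinates exceeding `r` in absolute value -/
def countSet (n k : ℕ) (r : ℝ) : Set (Fin n → ℝ) :=
  ⋃ S ∈ Finset.powersetCard k (Finset.univ : Finset (Fin n)),
    {x : Fin n → ℝ | ∀ j ∈ S, r < |x j|}

lemma cylinder_eq (n : ℕ) (S : Finset (Fin n)) (r : ℝ) :
    {x : Fin n → ℝ | ∀ j ∈ S, r < |x j|} =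
      Set.pi Set.univ (fun j => if j ∈ S then {y : ℝ | r < |y|} else Set.univ) := by
  ext x
  simp only [Set.mem_setOf_eq, Set.mem_pi, Set.mem_univ, forall_true_left]
  constructor
  · intro h j
    by_cases hj : j ∈ S <;> simp [hj, h]
  · intro h j hj
    have := h j
    simpa [hj] using this

lemma measurableSet_tail (r : ℝ) : MeasurableSet {y : ℝ | r < |y|} :=
  measurableSet_lt measurable_const measurable_id.abs

lemma measurableSet_countSet (n k : ℕ) (r : ℝ) : MeasurableSet (countSet n k r) := by
  refine MeasurableSet.biUnion (Finset.countable_toSet _) (fun S _ => ?_)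
  rw [cylinder_eq]
  refine MeasurableSet.univ_pi (fun j => ?_)
  by_cases hj : j ∈ S
  · simpa [hj] using measurableSet_tail r
  · simp [hj]

lemma cylinder_measure (n : ℕ) (S : Finset (Fin n)) (r : ℝ) :
    stdGaussian n {x : Fin n → ℝ | ∀ j ∈ S, r < |x j|} =
      (gaussianReal 0 1 {y : ℝ | r < |y|}) ^ S.card := by
  rw [cylinder_eq, _root_.stdGaussian, MeasureTheory.Measure.pi_pi]
  simp_rw [apply_ite (gaussianReal 0 1), measure_univ]
  rw [Finset.prod_ite_mem Finset.univ S (fun _ => gaussianReal 0 1 {y : ℝ | r < |y|}),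
    Finset.univ_inter, Finset.prod_const]

lemma measure_countSet (n k : ℕ) (r : ℝ) :
    stdGaussian n (countSet n k r) ≤
      (n.choose k : ENNReal) * (gaussianReal 0 1 {y : ℝ | r < |y|}) ^ k := by
  refine le_trans (measure_biUnion_finset_le _ _) ?_
  have : ∀ S ∈ Finset.powersetCard k (Finset.univ : Finset (Fin n)),
      stdGaussian n {x : Fin n → ℝ | ∀ j ∈ S, r < |x j|} =
        (gaussianReal 0 1 {y : ℝ | r < |y|}) ^ k := by
    intro S hS
    rw [cylinder_measure, (Finset.mem_powersetCard.mp hS).2]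
  rw [Finset.sum_congr rfl this, Finset.sum_const, Finset.card_powersetCard,
    Finset.card_univ, Fintype.card_fin, nsmul_eq_mul]

lemma decRe_mem_countSet {n : ℕ} (x : Fin n → ℝ) (i : Fin n) (r : ℝ)
    (h : r < decRe x i) : x ∈ countSet n (i + 1) r := by
  set σ := Tuple.sort (fun j => |x j|) with hσ
  set T : Finset (Fin n) := (Finset.Iic i).image (fun j => σ j.rev) with hT
  have hcard : T.card = i + 1 := by
    rw [hT, Finset.card_image_of_injective _ (fun a b hab => by
      simpa using (Equiv.injective σ) hab), Fin.card_Iic]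
  refine Set.mem_biUnion (Finset.mem_powersetCard.mpr ⟨Finset.subset_univ _, hcard⟩) ?_
  intro j hj
  rw [hT] at hj
  obtain ⟨a, ha, rfl⟩ := Finset.mem_image.mp hj
  have hle : i.rev ≤ a.rev := Fin.rev_le_rev.mpr (Finset.mem_Iic.mp ha)
  have hmono := Tuple.monotone_sort (fun j => |x j|) hle
  exact lt_of_lt_of_le h hmono


lemma integral_shifted_gauss (c : ℝ) : ∫ x : ℝ, rexp (-((x - c)^2)/2) = √(2*π) := by
  rw [integral_sub_right_eq_self (fun x : ℝ => rexp (-(x^2)/2)) c]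
  have : ∀ x : ℝ, rexp (-(x^2)/2) = rexp (-(1/2) * x^2) := by intro x; ring_nf
  simp_rw [this, integral_gaussian]
  norm_num [mul_comm]

lemma integrable_shifted_gauss (c : ℝ) : Integrable (fun x : ℝ => rexp (-((x - c)^2)/2)) := by
  have h := (integrable_exp_neg_mul_sq (b := (1/2 : ℝ)) (by norm_num)).comp_sub_right c
  convert h using 2 with x
  ring_nf

lemma gauss_pdf_bound (s x c : ℝ) (hs : 0 ≤ s) (hx : s^2 ≤ c * x) (hc : c^2 = s^2) :
    gaussianPDFReal 0 1 x ≤ (√(2 * π))⁻¹ * (rexp (-(s^2)/2) * rexp (-((x - c)^2)/2)) := by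
  simp only [gaussianPDFReal, NNReal.coe_one, mul_one, sub_zero]
  rw [← Real.exp_add]
  refine mul_le_mul_of_nonneg_left (Real.exp_le_exp.2 (by nlinarith)) (by positivity)

lemma gauss_tail_half (s : ℝ) (hs : 0 ≤ s) (I : Set ℝ) (hI : MeasurableSet I)
    (c : ℝ) (hc : c^2 = s^2) (hIb : ∀ x ∈ I, s^2 ≤ c * x) :
    gaussianReal 0 1 I ≤ ENNReal.ofReal (rexp (-(s^2)/2)) := by
  rw [gaussianReal_apply_eq_integral 0 one_ne_zero I]
  refine ENNReal.ofReal_le_ofReal ?_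
  calc ∫ x in I, gaussianPDFReal 0 1 x
      ≤ ∫ x in I, (√(2 * π))⁻¹ * (rexp (-(s^2)/2) * rexp (-((x - c)^2)/2)) := by
        refine setIntegral_mono_on (integrable_gaussianPDFReal 0 1).integrableOn
          ((((integrable_shifted_gauss c).const_mul _).const_mul _)).integrableOn hI ?_
        intro x hx
        exact gauss_pdf_bound s x c hs (hIb x hx) hc
    _ ≤ ∫ x : ℝ, (√(2 * π))⁻¹ * (rexp (-(s^2)/2) * rexp (-((x - c)^2)/2)) := by
        refine setIntegral_le_integral (((integrable_shifted_gauss c).const_mul _).const_mul _) ?_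
        filter_upwards with x
        positivity
    _ = rexp (-(s^2)/2) := by
        rw [integral_const_mul, integral_const_mul, integral_shifted_gauss]
        rw [← mul_assoc, mul_comm _ (rexp _), mul_assoc, inv_mul_cancel₀, mul_one]
        positivity

lemma gauss_tail (s : ℝ) (hs : 0 ≤ s) :
    gaussianReal 0 1 {y : ℝ | s < |y|} ≤ ENNReal.ofReal (2 * rexp (-(s^2)/2)) := by
  have hsub : {y : ℝ | s < |y|} ⊆ Set.Ici s ∪ Set.Iic (-s) := by
    intro y hy
    simp only [Set.mem_setOf_eq] at hy
    rcases lt_abs.mp hy with h | h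
    · left; exact le_of_lt h
    · right; simp only [Set.mem_Iic]; linarith
  calc gaussianReal 0 1 {y : ℝ | s < |y|}
      ≤ gaussianReal 0 1 (Set.Ici s) + gaussianReal 0 1 (Set.Iic (-s)) :=
        le_trans (measure_mono hsub) (measure_union_le _ _)
    _ ≤ ENNReal.ofReal (rexp (-(s^2)/2)) + ENNReal.ofReal (rexp (-(s^2)/2)) := by
        gcongr
        · refine gauss_tail_half s hs _ measurableSet_Ici s rfl (fun x hx => ?_)
          have : s ≤ x := hx
          nlinarith
        · refine gauss_tail_half s hs _ measurableSet_Iic (-s) (by ring) (fun x hx => ?_)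
          have : x ≤ -s := hx
          nlinarith
    _ = ENNReal.ofReal (2 * rexp (-(s^2)/2)) := by
        rw [← ENNReal.ofReal_add (by positivity) (by positivity)]; ring_nf


lemma term_bound (n k : ℕ) (t : ℝ) (ht : 0 ≤ t) (hn : 3 ≤ n) (hk1 : 1 ≤ k)
    (hk2 : (k : ℝ) ≤ ((n : ℝ) + 1) / 2) :
    (n.choose k : ℝ) * (2 * rexp (-((6 * √(Real.log ((n:ℝ)/(k:ℝ)) + t^2/(k:ℝ)))^2)/2))^k ≤
      rexp (-(18 * t^2)) * (1/2)^k := by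
  have hn0 : (0:ℝ) < n := by positivity
  have hn3 : (3:ℝ) ≤ n := by exact_mod_cast hn
  have hk0 : (0:ℝ) < k := by exact_mod_cast hk1
  set q : ℝ := (k:ℝ) / n with hq
  have hq0 : 0 < q := by positivity
  have hq23 : q ≤ 2/3 := by
    rw [hq, div_le_div_iff₀ hn0 (by norm_num)]
    linarith
  set L : ℝ := Real.log ((n:ℝ)/(k:ℝ)) with hL
  have hL0 : 0 ≤ L := by
    apply Real.log_nonneg
    rw [le_div_iff₀ hk0, one_mul]
    linarith
  have hin : 0 ≤ L + t^2/k := by positivity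
  have hr2 : (6 * √(L + t^2/(k:ℝ)))^2 = 36 * (L + t^2/k) := by
    rw [mul_pow, Real.sq_sqrt hin]; norm_num
  have hexpL : rexp (-(18 * L)) = q ^ 18 := by
    rw [Real.exp_neg, show (18:ℝ) * L = (18:ℕ) * L by norm_num, Real.exp_nat_mul,
      hL, Real.exp_log (by positivity), hq, ← inv_pow, inv_div]
  have step1 : 2 * rexp (-((6 * √(L + t^2/(k:ℝ)))^2)/2) = 2 * q^18 * rexp (-(18 * t^2)/k) := by
    rw [hr2, show -(36 * (L + t^2/(k:ℝ)))/2 = -(18*L) + -(18 * t^2)/(k:ℝ) by ring,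
      Real.exp_add, hexpL]
    ring
  have hkt : (k:ℝ) * (-(18 * t^2)/(k:ℝ)) = -(18*t^2) := by field_simp
  rw [step1, mul_pow, ← Real.exp_nat_mul, hkt]
  have hfact : (0:ℝ) < (k.factorial : ℝ) := by positivity
  have hek : rexp ((k:ℕ):ℝ) = rexp 1 ^ k := by rw [← Real.exp_nat_mul]; norm_num
  have hkk' : ((k:ℕ):ℝ)^k ≤ rexp 1 ^ k * (k.factorial : ℝ) := by
    rw [← hek]
    exact (div_le_iff₀ hfact).mp (Real.pow_div_factorial_le_exp (x := ((k:ℕ):ℝ)) hk0.le k)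
  have step3 : (n.choose k : ℝ) ≤ (rexp 1 / q) ^ k := by
    refine le_trans (Nat.choose_le_pow_div k n) ?_
    have hrhs : (rexp 1 / q)^k = (rexp 1 ^ k * (n:ℝ)^k) / ((k:ℕ):ℝ)^k := by
      rw [hq, div_div_eq_mul_div, div_pow, mul_pow]
    rw [hrhs, div_le_div_iff₀ hfact (by positivity)]
    calc (n:ℝ)^k * ((k:ℕ):ℝ)^k ≤ (n:ℝ)^k * (rexp 1 ^ k * (k.factorial:ℝ)) := by gcongr
      _ = rexp 1 ^ k * (n:ℝ)^k * (k.factorial:ℝ) := by ring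
  have step5 : rexp 1 / q * (2 * q^18) ≤ 1/2 := by
    have h17 : q^17 ≤ (2/3:ℝ)^17 := pow_le_pow_left₀ hq0.le hq23 17
    have he : rexp 1 < 2.7182818286 := Real.exp_one_lt_d9
    have hrw : rexp 1 / q * (2 * q^18) = 2 * rexp 1 * q^17 := by
      field_simp
    rw [hrw]
    calc 2 * rexp 1 * q^17 ≤ 2 * 2.7182818286 * (2/3:ℝ)^17 := by
          have := Real.exp_pos 1
          gcongr <;> norm_num [he.le]
      _ ≤ 1/2 := by norm_num
  calc (n.choose k : ℝ) * ((2 * q^18)^k * rexp (-(18*t^2)))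
      ≤ (rexp 1 / q)^k * ((2 * q^18)^k * rexp (-(18*t^2))) := by gcongr
    _ = (rexp 1 / q * (2 * q^18))^k * rexp (-(18*t^2)) := by rw [mul_pow]; ring
    _ ≤ (1/2)^k * rexp (-(18*t^2)) := by gcongr
    _ = rexp (-(18*t^2)) * (1/2)^k := by ring

end Helpers

open Real in
/-- There exists a universal constant `C > 0` such that for every `n ≥ 3`, `t ≥ 0` and
`X` standard Gaussian in `ℝ^n`, with probability at least `1 - C exp(-t²)` one has
`X_[i] ≤ C (ln(n/i) + t²/i)^{1/2}` for all `1 ≤ i ≤ (n+1)/2`. -/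
theorem order_statistics_upper_bound :
    ∃ C : ℝ, 0 < C ∧
      ∀ (n : ℕ) (t : ℝ), 3 ≤ n → 0 ≤ t →
        1 - C * Real.exp (-t ^ 2) ≤
          ((stdGaussian n) {x | ∀ i : Fin n, ((i : ℝ) + 1) ≤ ((n : ℝ) + 1) / 2 →
            decRe x i ≤
              C * (Real.log ((n : ℝ) / ((i : ℝ) + 1)) + t ^ 2 / ((i : ℝ) + 1)) ^ ((1 : ℝ) / 2)}).toReal := by
  refine ⟨6, by norm_num, fun n t hn ht => ?_⟩
  haveI : IsProbabilityMeasure (stdGaussian n) := by unfold _root_.stdGaussian; infer_instance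
  set E : Set (Fin n → ℝ) := {x | ∀ i : Fin n, ((i : ℝ) + 1) ≤ ((n : ℝ) + 1) / 2 →
      decRe x i ≤
        6 * (Real.log ((n : ℝ) / ((i : ℝ) + 1)) + t ^ 2 / ((i : ℝ) + 1)) ^ ((1 : ℝ) / 2)} with hE
  set bd : Fin n → ℝ := fun i =>
    6 * (Real.log ((n : ℝ) / ((i : ℝ) + 1)) + t ^ 2 / ((i : ℝ) + 1)) ^ ((1 : ℝ) / 2) with hbd
  set I : Finset (Fin n) := Finset.univ.filter (fun i => ((i : ℝ) + 1) ≤ ((n : ℝ) + 1) / 2) with hI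
  set U : Set (Fin n → ℝ) := ⋃ i ∈ I, countSet n ((i : ℕ) + 1) (bd i) with hU
  -- basic facts about indices in I
  have hcast : ∀ i : Fin n, ((((i:ℕ) + 1 : ℕ)) : ℝ) = (i : ℝ) + 1 := by intro i; push_cast; ring
  have hbd_sqrt : ∀ i : Fin n, i ∈ I →
      bd i = 6 * √(Real.log ((n:ℝ)/((((i:ℕ)+1 : ℕ)):ℝ)) + t^2/((((i:ℕ)+1 : ℕ)):ℝ)) := by
    intro i _
    rw [hbd]
    simp only [hcast]
    rw [Real.sqrt_eq_rpow]
  have hLnonneg : ∀ i : Fin n, i ∈ I →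
      0 ≤ Real.log ((n:ℝ)/((((i:ℕ)+1 : ℕ)):ℝ)) + t^2/((((i:ℕ)+1 : ℕ)):ℝ) := by
    intro i hi
    have hi' : ((i : ℝ) + 1) ≤ ((n : ℝ) + 1) / 2 := by
      rw [hI] at hi; exact (Finset.mem_filter.mp hi).2
    have hk0 : (0:ℝ) < ((i:ℕ):ℝ) + 1 := by positivity
    have hn3 : (3:ℝ) ≤ (n:ℝ) := by exact_mod_cast hn
    have hlog : 0 ≤ Real.log ((n:ℝ)/(((i:ℕ):ℝ) + 1)) := by
      apply Real.log_nonneg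
      rw [le_div_iff₀ hk0, one_mul]
      linarith
    rw [hcast]
    positivity
  -- the complement of U is contained in E
  have hsubset : Uᶜ ⊆ E := by
    intro x hx
    intro i hi
    by_contra hlt
    push_neg at hlt
    have hiI : i ∈ I := by rw [hI]; exact Finset.mem_filter.mpr ⟨Finset.mem_univ i, hi⟩
    have hxA : x ∈ countSet n ((i:ℕ) + 1) (bd i) := decRe_mem_countSet x i (bd i) hlt
    exact hx (Set.mem_biUnion hiI hxA)
  have hUmeas : MeasurableSet U :=
    Finset.measurableSet_biUnion I (fun i _ => measurableSet_countSet _ _ _)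
  -- measure of U
  have hUle : stdGaussian n U ≤ ENNReal.ofReal (rexp (-t^2)) := by
    calc stdGaussian n U ≤ ∑ i ∈ I, stdGaussian n (countSet n ((i:ℕ) + 1) (bd i)) :=
          measure_biUnion_finset_le I _
      _ ≤ ∑ i ∈ I, ENNReal.ofReal (rexp (-(18*t^2)) * (1/2)^((i:ℕ)+1)) := by
          refine Finset.sum_le_sum (fun i hi => ?_)
          have hi' : ((i : ℝ) + 1) ≤ ((n : ℝ) + 1) / 2 := by
            rw [hI] at hi; exact (Finset.mem_filter.mp hi).2
          set k : ℕ := (i:ℕ) + 1 with hk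
          have hk2 : ((k:ℕ):ℝ) ≤ ((n:ℝ)+1)/2 := by rw [hcast]; exact hi'
          have hbdnn : 0 ≤ bd i := by
            rw [hbd_sqrt i hi]; positivity
          have htail : gaussianReal 0 1 {y : ℝ | bd i < |y|} ≤
              ENNReal.ofReal (2 * rexp (-((bd i)^2)/2)) := gauss_tail _ hbdnn
          calc stdGaussian n (countSet n k (bd i))
              ≤ (n.choose k : ENNReal) * (gaussianReal 0 1 {y : ℝ | bd i < |y|}) ^ k :=
                measure_countSet n k (bd i)
            _ ≤ (n.choose k : ENNReal) * (ENNReal.ofReal (2 * rexp (-((bd i)^2)/2))) ^ k := by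
                gcongr
            _ = ENNReal.ofReal ((n.choose k : ℝ) * (2 * rexp (-((bd i)^2)/2))^k) := by
                rw [← ENNReal.ofReal_pow (by positivity), ← ENNReal.ofReal_natCast (n.choose k),
                  ← ENNReal.ofReal_mul (by positivity)]
            _ ≤ ENNReal.ofReal (rexp (-(18*t^2)) * (1/2)^k) := by
                refine ENNReal.ofReal_le_ofReal ?_
                have := term_bound n k t ht hn (by omega) hk2
                rw [hbd_sqrt i hi]
                exact this
      _ ≤ ∑ i : Fin n, ENNReal.ofReal (rexp (-(18*t^2)) * (1/2)^((i:ℕ)+1)) :=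
          Finset.sum_le_sum_of_subset (Finset.filter_subset _ _)
      _ = ENNReal.ofReal (∑ i : Fin n, rexp (-(18*t^2)) * (1/2)^((i:ℕ)+1)) := by
          rw [ENNReal.ofReal_sum_of_nonneg (fun i _ => by positivity)]
      _ ≤ ENNReal.ofReal (rexp (-t^2)) := by
          refine ENNReal.ofReal_le_ofReal ?_
          rw [← Finset.mul_sum]
          have hsum : ∑ i : Fin n, ((1:ℝ)/2)^((i:ℕ)+1) ≤ 1 := by
            rw [Fin.sum_univ_eq_sum_range (fun j => ((1:ℝ)/2)^(j+1))]
            have := sum_geometric_two_le n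
            calc ∑ j ∈ Finset.range n, ((1:ℝ)/2)^(j+1)
                = (1/2) * ∑ j ∈ Finset.range n, ((1:ℝ)/2)^j := by
                  rw [Finset.mul_sum]
                  exact Finset.sum_congr rfl (fun j _ => by rw [pow_succ]; ring
                    )
              _ ≤ (1/2) * 2 := by
                  have h2 : ∑ j ∈ Finset.range n, ((1:ℝ)/2)^j ≤ 2 := by
                    simpa [one_div] using this
                  linarith
              _ = 1 := by norm_num
          have hexp : rexp (-(18*t^2)) ≤ rexp (-t^2) := by
            apply Real.exp_le_exp.2; nlinarith
          calc rexp (-(18*t^2)) * ∑ i : Fin n, ((1:ℝ)/2)^((i:ℕ)+1)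
              ≤ rexp (-(18*t^2)) * 1 := by
                have := Real.exp_pos (-(18*t^2)); gcongr
            _ ≤ rexp (-t^2) := by rw [mul_one]; exact hexp
  -- conclude
  have hcompl : (1:ENNReal) - ENNReal.ofReal (rexp (-t^2)) ≤ stdGaussian n E := by
    refine le_trans ?_ (measure_mono hsubset)
    rw [measure_compl hUmeas (measure_ne_top _ _), measure_univ]
    exact tsub_le_tsub_left hUle 1
  have hEfin : stdGaussian n E ≠ ⊤ := measure_ne_top _ _
  have h1 : ((1:ENNReal) - ENNReal.ofReal (rexp (-t^2))).toReal ≤ (stdGaussian n E).toReal :=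
    ENNReal.toReal_mono hEfin hcompl
  have h2 : ((1:ENNReal) - ENNReal.ofReal (rexp (-t^2))).toReal = 1 - rexp (-t^2) := by
    rw [ENNReal.toReal_sub_of_le (ENNReal.ofReal_le_one.mpr (Real.exp_le_one_iff.mpr (by nlinarith)))
      (by norm_num), ENNReal.toReal_ofReal (Real.exp_nonneg _), ENNReal.toReal_one]
  have h3 : 0 < rexp (-t^2) := Real.exp_pos _
  rw [hE] at h1 ⊢
  rw [h2] at h1
  have : (-t^2 : ℝ) = -t^2 := rfl
  calc (1:ℝ) - 6 * Real.exp (-t ^ 2) ≤ 1 - rexp (-t^2) := by nlinarith [Real.exp_pos (-t^2)]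
    _ ≤ _ := h1
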